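/- For every d ≥ 2 and every ρ with 1 ≤ ρ ≤ d−1, the hyper-simplex Δ(d,ρ) = conv{v ∈ {0,1}^d : Σ_{i=1}^d v_i = ρ} satisfies h(G(Δ(d,ρ))) ≥ 1. -/

import Mathlib

open scoped Classical

noncomputable section

/-- The number of edges of `G` leaving the set `S`, counted as ordered pairs
`(u, v)` with `u ∈ S`, `v ∉ S` and `u ~ v` (each cut edge is counted once). -/
def cutCard {V : Type*} [Fintype V] (G : SimpleGraph V) (S : Set V) : ℕ :=
  {p : V × V | p.1 ∈ S ∧ p.2 ∉ S ∧ G.Adj p.1 p.2}.ncard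

/-- The edge expansion `h(G)` of a finite graph: the infimum of `|δ(S)|/|S|`
over all nonempty `S` with `|S| ≤ |V|/2`. -/
noncomputable def edgeExpansion {V : Type*} [Fintype V] (G : SimpleGraph V) : ℝ :=
  sInf { r : ℝ | ∃ S : Set V, S.Nonempty ∧ 2 * S.ncard ≤ Fintype.card V ∧
    r = (cutCard G S : ℝ) / (S.ncard : ℝ) }
/-- All points of `X` are 0/1-vectors. -/
def IsZeroOne {ι : Type*} (X : Finset (ι → ℝ)) : Prop :=
  ∀ x ∈ X, ∀ i, x i = 0 ∨ x i = 1

/-- Two vertices `u v` of the 0/1-polytope `P = conv X` are adjacent iff they are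
distinct and there is a linear functional whose maximum over `P` is attained
exactly on the segment `[u, v]`. -/
def PolytopeAdj {ι : Type*} [Fintype ι] (X : Finset (ι → ℝ)) (u v : ι → ℝ) : Prop :=
  u ∈ X ∧ v ∈ X ∧ u ≠ v ∧ ∃ (f : (ι → ℝ) →ₗ[ℝ] ℝ) (c : ℝ),
    (∀ x ∈ convexHull ℝ (X : Set (ι → ℝ)), f x ≤ c) ∧
    {x ∈ convexHull ℝ (X : Set (ι → ℝ)) | f x = c} = segment ℝ u v

/-- The graph `G(P)` of the 0/1-polytope `P = conv X`, on the vertex set `X`. -/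
def polytopeGraph {ι : Type*} [Fintype ι] (X : Finset (ι → ℝ)) :
    SimpleGraph {x // x ∈ X} where
  Adj u v := PolytopeAdj X u.1 v.1
  symm := ⟨by
    rintro u v ⟨hu, hv, hne, f, c, h1, h2⟩
    exact ⟨hv, hu, hne.symm, f, c, h1, by rw [h2, segment_symm]⟩⟩
  loopless := ⟨by rintro u ⟨_, _, hne, _⟩; exact hne rfl⟩

/-- The vertex set of the hyper-simplex `Δ(d, ρ)`: all 0/1-vectors in `ℝ^d` with
exactly `ρ` coordinates equal to one. -/
def hypersimplexVerts (d ρ : ℕ) : Finset (Fin d → ℝ) :=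
  ((Finset.univ : Finset (Fin d → Bool)).filter
      (fun b => (Finset.univ.filter (fun i => b i = true)).card = ρ)).image
    (fun b i => if b i then (1 : ℝ) else 0)

namespace HS

variable {d : ℕ}

def act (π : Equiv.Perm (Fin d)) (A : Finset (Fin d)) : Finset (Fin d) := A.image π

lemma act_one (A : Finset (Fin d)) : act 1 A = A := by
  simp [act]

lemma act_mul (α β : Equiv.Perm (Fin d)) (A : Finset (Fin d)) :
    act (α * β) A = act α (act β A) := by
  simp [act, Finset.image_image]

lemma act_inj (π : Equiv.Perm (Fin d)) : Function.Injective (act π) :=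
  Finset.image_injective π.injective

lemma act_card (π : Equiv.Perm (Fin d)) (A : Finset (Fin d)) : (act π A).card = A.card :=
  Finset.card_image_of_injective _ π.injective

def cutc (S : Finset (Finset (Fin d))) (π : Equiv.Perm (Fin d)) : ℕ :=
  (S.filter (fun A => act π A ∉ S)).card

lemma cutc_one (S : Finset (Finset (Fin d))) : cutc S 1 = 0 := by
  simp [cutc, act_one]

lemma cutc_mul_le (S : Finset (Finset (Fin d))) (α β : Equiv.Perm (Fin d)) :
    cutc S (α * β) ≤ cutc S α + cutc S β := by
  classical
  have hsub : S.filter (fun A => act (α * β) A ∉ S) ⊆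
      (S.filter (fun A => act β A ∈ S ∧ act α (act β A) ∉ S)) ∪
        (S.filter (fun A => act β A ∉ S)) := by
    intro A hA
    simp only [Finset.mem_filter, Finset.mem_union] at *
    rcases hA with ⟨hAS, hout⟩
    by_cases h : act β A ∈ S
    · exact Or.inl ⟨hAS, h, by rwa [act_mul] at hout⟩
    · exact Or.inr ⟨hAS, h⟩
  calc cutc S (α * β) ≤ _ := Finset.card_le_card hsub
    _ ≤ (S.filter (fun A => act β A ∈ S ∧ act α (act β A) ∉ S)).card
        + (S.filter (fun A => act β A ∉ S)).card := Finset.card_union_le _ _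
    _ ≤ cutc S α + cutc S β := by
        refine Nat.add_le_add ?_ le_rfl
        refine Finset.card_le_card_of_injOn (act β) ?_ ?_
        · intro A hA
          simp only [Finset.mem_coe, Finset.mem_filter] at *
          exact ⟨hA.2.1, hA.2.2⟩
        · exact fun x _ y _ h => act_inj β h

end HS

namespace HS

/-- Selection-sort stages: `stage π k` fixes all points `< k`. -/
def stage (π : Equiv.Perm (Fin d)) : ℕ → Equiv.Perm (Fin d)
  | 0 => π
  | (k+1) =>
      if h : k < d then Equiv.swap ⟨k, h⟩ (stage π k ⟨k, h⟩) * stage π k else stage π k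

lemma stage_fix (π : Equiv.Perm (Fin d)) :
    ∀ k, ∀ j (hj : j < d), j < k → stage π k ⟨j, hj⟩ = ⟨j, hj⟩ := by
  intro k
  induction k with
  | zero => intro j hj h; omega
  | succ k ih =>
      intro j hj hjk
      by_cases hk : k < d
      · rw [stage, dif_pos hk]
        rcases Nat.lt_succ_iff_lt_or_eq.mp hjk with hjk' | rfl
        · have h1 : stage π k ⟨j, hj⟩ = ⟨j, hj⟩ := ih j hj hjk'
          have h2 : (⟨j, hj⟩ : Fin d) ≠ ⟨k, hk⟩ := by
            simp only [ne_eq, Fin.mk.injEq]; omega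
          have h3 : (⟨j, hj⟩ : Fin d) ≠ stage π k ⟨k, hk⟩ := by
            intro h
            exact h2 ((stage π k).injective (h1.trans h) : (⟨j,hj⟩:Fin d) = ⟨k,hk⟩)
          simp only [Equiv.Perm.mul_apply, h1]
          exact Equiv.swap_apply_of_ne_of_ne h2 h3
        · simp only [Equiv.Perm.mul_apply]
          exact Equiv.swap_apply_right _ _
      · rw [stage, dif_neg hk]
        have hjk' : j < k := by omega
        exact ih j hj hjk'

end HS

namespace HS

lemma stage_top (π : Equiv.Perm (Fin d)) : stage π d = 1 := by
  ext x
  have h := stage_fix π d x.val x.isLt x.isLt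
  have h2 : stage π d x = x := by simpa [Fin.eta] using h
  simp [h2]

/-- The `k`-th letter of the selection-sort word of `π`. -/
def letter (π : Equiv.Perm (Fin d)) (k : Fin d) : Equiv.Perm (Fin d) :=
  Equiv.swap k (stage π k.val k)

lemma stage_succ (π : Equiv.Perm (Fin d)) (k : Fin d) :
    stage π (k.val + 1) = letter π k * stage π k.val := by
  rw [stage, dif_pos k.isLt, letter, Fin.eta]

lemma letter_mul_stage_succ (π : Equiv.Perm (Fin d)) (k : Fin d) :
    stage π k.val = letter π k * stage π (k.val + 1) := by
  rw [stage_succ, ← mul_assoc, letter]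
  simp [Equiv.swap_mul_self]

lemma cutc_le_sum_letters (S : Finset (Finset (Fin d))) (π : Equiv.Perm (Fin d)) :
    cutc S π ≤ ∑ k : Fin d, cutc S (letter π k) := by
  classical
  have key : ∀ m k, k + m = d →
      cutc S (stage π k) ≤ ∑ j ∈ Finset.Ico k d,
        (if h : j < d then cutc S (letter π ⟨j, h⟩) else 0) := by
    intro m
    induction m with
    | zero =>
        intro k hk
        subst hk
        simp only [Nat.add_zero] at *
        rw [stage_top, cutc_one]
        exact Nat.zero_le _
    | succ m ih =>
        intro k hk
        have hkd : k < d := by omega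
        have hrec := ih (k + 1) (by omega)
        have hdec : cutc S (stage π k) ≤ cutc S (letter π ⟨k, hkd⟩) + cutc S (stage π (k+1)) := by
          have h1 : stage π k = letter π ⟨k, hkd⟩ * stage π (k + 1) :=
            letter_mul_stage_succ π ⟨k, hkd⟩
          rw [h1]
          exact cutc_mul_le S _ _
        have hsum : ∑ j ∈ Finset.Ico k d,
            (if h : j < d then cutc S (letter π ⟨j, h⟩) else 0)
            = (if h : k < d then cutc S (letter π ⟨k, h⟩) else 0)
              + ∑ j ∈ Finset.Ico (k+1) d,
                (if h : j < d then cutc S (letter π ⟨j, h⟩) else 0) := by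
          rw [Finset.sum_eq_sum_Ico_succ_bot hkd]
        rw [hsum, dif_pos hkd]
        exact le_trans hdec (Nat.add_le_add le_rfl hrec)
  have h0 := key d 0 (by omega)
  have : cutc S π = cutc S (stage π 0) := rfl
  rw [this]
  refine le_trans h0 (le_of_eq ?_)
  rw [Finset.sum_Ico_eq_sum_range]
  simp only [Nat.sub_zero, Nat.zero_add]
  rw [← Fin.sum_univ_eq_sum_range]
  exact Finset.sum_congr rfl (fun i _ => by rw [dif_pos i.isLt, Fin.eta])

end HS

namespace HS

lemma stage_mul_right (π τ : Equiv.Perm (Fin d)) (k : ℕ)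
    (hτ : ∀ j (hj : j < d), j < k → τ ⟨j, hj⟩ = ⟨j, hj⟩) :
    stage (π * τ) k = stage π k * τ := by
  induction k with
  | zero => rfl
  | succ k ih =>
      have ih' := ih (fun j hj hjk => hτ j hj (Nat.lt_succ_of_lt hjk))
      by_cases hk : k < d
      · rw [stage, stage, dif_pos hk, dif_pos hk, ih']
        have hval : (stage π k * τ) ⟨k, hk⟩ = stage π k ⟨k, hk⟩ := by
          simp [Equiv.Perm.mul_apply, hτ k hk (Nat.lt_succ_self k)]
        rw [hval, mul_assoc]
      · rw [stage, stage, dif_neg hk, dif_neg hk, ih']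

lemma stage_val_ge (π : Equiv.Perm (Fin d)) (k : ℕ) (hk : k < d) :
    k ≤ (stage π k ⟨k, hk⟩).val := by
  by_contra h
  push_neg at h
  set v := stage π k ⟨k, hk⟩ with hv
  have h1 : stage π k ⟨v.val, v.isLt⟩ = ⟨v.val, v.isLt⟩ := stage_fix π k v.val v.isLt h
  have hveq : (⟨v.val, v.isLt⟩ : Fin d) = v := Fin.eta v v.isLt
  rw [hveq] at h1
  have h3 : v = ⟨k, hk⟩ := (stage π k).injective (h1.trans hv)
  have : v.val = k := by simpa using congrArg Fin.val h3
  omega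

end HS

namespace HS

def Cls (k v : Fin d) : Finset (Equiv.Perm (Fin d)) :=
  Finset.univ.filter (fun π => stage π k.val k = v)

lemma stage_flip (π : Equiv.Perm (Fin d)) (k w : Fin d) (hw : k.val ≤ w.val) :
    stage (π * Equiv.swap k ((stage π k.val).symm w)) k.val
      = stage π k.val * Equiv.swap k ((stage π k.val).symm w) := by
  apply stage_mul_right
  intro j hj hjk
  have h1 : (⟨j, hj⟩ : Fin d) ≠ k := by
    intro h
    have := congrArg Fin.val h
    simp only [Fin.val_mk] at this
    omega
  have h2 : (⟨j, hj⟩ : Fin d) ≠ (stage π k.val).symm w := by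
    intro h
    have hjw : stage π k.val ⟨j, hj⟩ = w := by
      rw [h]; exact (stage π k.val).apply_symm_apply w
    rw [stage_fix π k.val j hj hjk] at hjw
    have := congrArg Fin.val hjw
    simp only [Fin.val_mk] at this
    omega
  exact Equiv.swap_apply_of_ne_of_ne h1 h2

end HS

namespace HS

lemma cls_card_le (k v : Fin d) (hvk : v ≠ k) :
    2 * (Cls k v).card ≤ Nat.factorial d := by
  classical
  -- the flip map sends the class of `v` into the class of `k`, injectively
  set Φ : Equiv.Perm (Fin d) → Equiv.Perm (Fin d) :=
    fun π => π * Equiv.swap k ((stage π k.val).symm k) with hΦ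
  have hmaps : ∀ π ∈ Cls k v, Φ π ∈ Cls k k := by
    intro π hπ
    simp only [Cls, Finset.mem_filter, Finset.mem_univ, true_and] at hπ ⊢
    rw [hΦ]
    simp only
    rw [stage_flip π k k le_rfl]
    simp only [Equiv.Perm.mul_apply, Equiv.swap_apply_left]
    exact (stage π k.val).apply_symm_apply k
  have hinj : ∀ π ∈ Cls k v, ∀ π' ∈ Cls k v, Φ π = Φ π' → π = π' := by
    have hleft : ∀ π ∈ Cls k v,
        (Φ π) * Equiv.swap k ((stage (Φ π) k.val).symm v) = π := by
      intro π hπ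
      simp only [Cls, Finset.mem_filter, Finset.mem_univ, true_and] at hπ
      have hst : stage (Φ π) k.val = stage π k.val * Equiv.swap k ((stage π k.val).symm k) :=
        stage_flip π k k le_rfl
      have hsymm : (stage (Φ π) k.val).symm v = (stage π k.val).symm k := by
        rw [hst]
        have : (stage π k.val * Equiv.swap k ((stage π k.val).symm k)).symm v
            = (Equiv.swap k ((stage π k.val).symm k)) ((stage π k.val).symm v) := by
          simp [Equiv.Perm.mul_apply, Equiv.symm_apply_eq]
        rw [this]
        have hv : (stage π k.val).symm v = k := by
          rw [Equiv.symm_apply_eq]; exact hπ.symm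
        rw [hv, Equiv.swap_apply_left]
      rw [hsymm, hΦ]
      simp only
      rw [mul_assoc, Equiv.swap_mul_self, mul_one]
    intro π hπ π' hπ' heq
    have := hleft π hπ
    rw [heq, hleft π' hπ'] at this
    exact this.symm
  have hdisj : Disjoint (Cls k v) (Cls k k) := by
    rw [Finset.disjoint_left]
    intro π h1 h2
    simp only [Cls, Finset.mem_filter, Finset.mem_univ, true_and] at h1 h2
    exact hvk (h1.symm.trans h2)
  have hcle : (Cls k v).card ≤ (Cls k k).card :=
    Finset.card_le_card_of_injOn Φ hmaps fun x hx y hy => hinj x hx y hy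
  have hunion : (Cls k v).card + (Cls k k).card ≤ Nat.factorial d := by
    rw [← Finset.card_union_of_disjoint hdisj]
    calc ((Cls k v) ∪ (Cls k k)).card ≤ (Finset.univ : Finset (Equiv.Perm (Fin d))).card :=
          Finset.card_le_card (Finset.subset_univ _)
      _ = Nat.factorial d := by rw [Finset.card_univ, Fintype.card_perm, Fintype.card_fin]
  omega

end HS

namespace HS

def Pairs (d : ℕ) : Finset (Fin d × Fin d) :=
  Finset.univ.filter (fun p => p.1.val < p.2.val)

lemma cutc_swap_self (S : Finset (Finset (Fin d))) (k : Fin d) :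
    cutc S (Equiv.swap k k) = 0 := by
  rw [Equiv.swap_self]
  exact cutc_one S

lemma sum_letter_le (S : Finset (Finset (Fin d))) (k : Fin d) :
    2 * ∑ π : Equiv.Perm (Fin d), cutc S (letter π k)
      ≤ Nat.factorial d *
        ∑ v ∈ Finset.univ.filter (fun v : Fin d => k.val < v.val), cutc S (Equiv.swap k v) := by
  classical
  have hcomp : ∑ π : Equiv.Perm (Fin d), cutc S (letter π k)
      = ∑ v ∈ Finset.univ.image (fun π : Equiv.Perm (Fin d) => stage π k.val k),
          (Cls k v).card • cutc S (Equiv.swap k v) := by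
    simp only [Cls, letter]
    exact Finset.sum_comp (fun v => cutc S (Equiv.swap k v))
        (fun π : Equiv.Perm (Fin d) => stage π k.val k)
  rw [hcomp]
  have hterm : ∀ v ∈ Finset.univ.image (fun π : Equiv.Perm (Fin d) => stage π k.val k),
      2 * ((Cls k v).card • cutc S (Equiv.swap k v))
        ≤ Nat.factorial d * (if k.val < v.val then cutc S (Equiv.swap k v) else 0) := by
    intro v hv
    by_cases hvk : v = k
    · subst hvk
      rw [cutc_swap_self, smul_zero, mul_zero]
      exact Nat.zero_le _
    · have hval : k.val ≤ v.val := by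
        rcases Finset.mem_image.mp hv with ⟨π, _, hπ⟩
        have := stage_val_ge π k.val k.isLt
        rw [Fin.eta] at this
        rw [← hπ]
        exact this
      have hlt : k.val < v.val := lt_of_le_of_ne hval (by
        intro h
        exact hvk (Fin.ext h.symm))
      rw [if_pos hlt, smul_eq_mul, ← mul_assoc]
      exact Nat.mul_le_mul_right _ (cls_card_le k v hvk)
  calc 2 * ∑ v ∈ Finset.univ.image (fun π : Equiv.Perm (Fin d) => stage π k.val k),
        (Cls k v).card • cutc S (Equiv.swap k v)
      = ∑ v ∈ Finset.univ.image (fun π : Equiv.Perm (Fin d) => stage π k.val k),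
          2 * ((Cls k v).card • cutc S (Equiv.swap k v)) := by rw [Finset.mul_sum]
    _ ≤ ∑ v ∈ Finset.univ.image (fun π : Equiv.Perm (Fin d) => stage π k.val k),
          Nat.factorial d * (if k.val < v.val then cutc S (Equiv.swap k v) else 0) :=
        Finset.sum_le_sum hterm
    _ ≤ ∑ v : Fin d,
          Nat.factorial d * (if k.val < v.val then cutc S (Equiv.swap k v) else 0) :=
        Finset.sum_le_sum_of_subset_of_nonneg (Finset.subset_univ _)
          (fun _ _ _ => Nat.zero_le _)
    _ = ∑ v ∈ Finset.univ.filter (fun v : Fin d => k.val < v.val),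
          Nat.factorial d * cutc S (Equiv.swap k v) := by
        rw [Finset.sum_filter]
        exact Finset.sum_congr rfl (fun v _ => by rw [mul_ite, mul_zero])
    _ = Nat.factorial d *
          ∑ v ∈ Finset.univ.filter (fun v : Fin d => k.val < v.val), cutc S (Equiv.swap k v) := by
        rw [Finset.mul_sum]

lemma total_upper (S : Finset (Finset (Fin d))) :
    2 * ∑ π : Equiv.Perm (Fin d), cutc S π
      ≤ Nat.factorial d * ∑ p ∈ Pairs d, cutc S (Equiv.swap p.1 p.2) := by
  classical
  have h1 : ∑ π : Equiv.Perm (Fin d), cutc S π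
      ≤ ∑ π : Equiv.Perm (Fin d), ∑ k : Fin d, cutc S (letter π k) :=
    Finset.sum_le_sum (fun π _ => cutc_le_sum_letters S π)
  have h2 : ∑ p ∈ Pairs d, cutc S (Equiv.swap p.1 p.2)
      = ∑ k : Fin d, ∑ v ∈ Finset.univ.filter (fun v : Fin d => k.val < v.val),
          cutc S (Equiv.swap k v) := by
    rw [Pairs, Finset.sum_filter, Fintype.sum_prod_type]
    exact Finset.sum_congr rfl (fun k _ => by rw [Finset.sum_filter])
  calc 2 * ∑ π : Equiv.Perm (Fin d), cutc S π
      ≤ 2 * ∑ π : Equiv.Perm (Fin d), ∑ k : Fin d, cutc S (letter π k) := by omega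
    _ = ∑ k : Fin d, 2 * ∑ π : Equiv.Perm (Fin d), cutc S (letter π k) := by
        rw [Finset.sum_comm, Finset.mul_sum]
    _ ≤ ∑ k : Fin d, Nat.factorial d *
          ∑ v ∈ Finset.univ.filter (fun v : Fin d => k.val < v.val), cutc S (Equiv.swap k v) :=
        Finset.sum_le_sum (fun k _ => sum_letter_le S k)
    _ = Nat.factorial d * ∑ p ∈ Pairs d, cutc S (Equiv.swap p.1 p.2) := by
        rw [h2, Finset.mul_sum]

end HS

namespace HS

lemma card_maps_le (ρ : ℕ) (A B : Finset (Fin d)) (hA : A.card = ρ) (hB : B.card = ρ) :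
    (Finset.univ.filter (fun π : Equiv.Perm (Fin d) => act π A = B)).card
      ≤ Nat.factorial ρ * Nat.factorial (d - ρ) := by
  classical
  have hmemB : ∀ (π : Equiv.Perm (Fin d)), act π A = B → ∀ a : Fin d, a ∈ A → π a ∈ B := by
    intro π h a ha
    rw [← h]
    exact Finset.mem_image_of_mem _ ha
  have hmemBc : ∀ (π : Equiv.Perm (Fin d)), act π A = B → ∀ a : Fin d, a ∉ A → π a ∉ B := by
    intro π h a ha hmem
    rw [← h, act] at hmem
    rcases Finset.mem_image.mp hmem with ⟨x, hx, hxa⟩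
    exact ha (π.injective hxa ▸ hx)
  set T := {π : Equiv.Perm (Fin d) // act π A = B}
  set J : T → ((A : Finset (Fin d)) ↪ (B : Finset (Fin d))) ×
      (((Aᶜ : Finset (Fin d)) : Finset (Fin d)) ↪ ((Bᶜ : Finset (Fin d)) : Finset (Fin d))) :=
    fun π => (⟨fun a => ⟨π.1 a.1, hmemB π.1 π.2 a.1 a.2⟩,
        fun x y hxy => Subtype.ext (π.1.injective (congrArg Subtype.val hxy))⟩,
      ⟨fun a => ⟨π.1 a.1, by
          have := hmemBc π.1 π.2 a.1 (Finset.mem_compl.mp a.2)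
          exact Finset.mem_compl.mpr this⟩,
        fun x y hxy => Subtype.ext (π.1.injective (congrArg Subtype.val hxy))⟩) with hJ
  have hJinj : Function.Injective J := by
    intro π π' h
    rcases Prod.mk.injEq _ _ _ _ ▸ h with ⟨h1, h2⟩
    apply Subtype.ext
    apply Equiv.ext
    intro x
    by_cases hx : x ∈ A
    · have := congrFun (congrArg (fun (e : (A : Finset (Fin d)) ↪ B) => (e : ↥A → ↥B)) h1)
        ⟨x, hx⟩
      exact congrArg Subtype.val this
    · have := congrFun (congrArg
        (fun (e : ((Aᶜ : Finset (Fin d)) : Finset (Fin d)) ↪ (Bᶜ : Finset (Fin d))) =>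
          (e : ↥(Aᶜ) → ↥(Bᶜ))) h2) ⟨x, Finset.mem_compl.mpr hx⟩
      exact congrArg Subtype.val this
  have hcard1 : Fintype.card ((A : Finset (Fin d)) ↪ (B : Finset (Fin d))) = Nat.factorial ρ := by
    rw [Fintype.card_embedding_eq]
    simp only [Fintype.card_coe, hA, hB]
    exact Nat.descFactorial_self ρ
  have hcard2 : Fintype.card (((Aᶜ : Finset (Fin d)) : Finset (Fin d)) ↪
      ((Bᶜ : Finset (Fin d)) : Finset (Fin d))) = Nat.factorial (d - ρ) := by
    rw [Fintype.card_embedding_eq]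
    simp only [Fintype.card_coe, Finset.card_compl, Fintype.card_fin, hA, hB]
    exact Nat.descFactorial_self _
  calc (Finset.univ.filter (fun π : Equiv.Perm (Fin d) => act π A = B)).card
      = Fintype.card T := (Fintype.card_subtype _).symm
    _ ≤ _ := Fintype.card_le_of_injective J hJinj
    _ = Nat.factorial ρ * Nat.factorial (d - ρ) := by
        rw [Fintype.card_prod, hcard1, hcard2]

end HS

namespace HS

lemma main_comb (ρ : ℕ) (hρd : ρ ≤ d) (S : Finset (Finset (Fin d)))
    (hcard : ∀ A ∈ S, A.card = ρ)
    (hhalf : 2 * S.card ≤ Nat.choose d ρ) :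
    S.card ≤ ∑ p ∈ Pairs d, cutc S (Equiv.swap p.1 p.2) := by
  classical
  have hfact : Nat.choose d ρ * (Nat.factorial ρ * Nat.factorial (d - ρ)) = Nat.factorial d := by
    rw [← mul_assoc]
    exact Nat.choose_mul_factorial_mul_factorial hρd
  have hperm_card : (Finset.univ : Finset (Equiv.Perm (Fin d))).card = Nat.factorial d := by
    rw [Finset.card_univ, Fintype.card_perm, Fintype.card_fin]
  -- for each A in S, at least half of the permutations push A out of S
  have hout : ∀ A ∈ S, Nat.factorial d ≤
      2 * (Finset.univ.filter (fun π : Equiv.Perm (Fin d) => act π A ∉ S)).card := by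
    intro A hA
    have hsplit : (Finset.univ.filter (fun π : Equiv.Perm (Fin d) => act π A ∈ S)).card
        + (Finset.univ.filter (fun π : Equiv.Perm (Fin d) => act π A ∉ S)).card
        = Nat.factorial d := by
      rw [← hperm_card]
      exact Finset.card_filter_add_card_filter_not _
    have hq : (Finset.univ.filter (fun π : Equiv.Perm (Fin d) => act π A ∈ S)).card
        ≤ S.card * (Nat.factorial ρ * Nat.factorial (d - ρ)) := by
      have hfib : (Finset.univ.filter (fun π : Equiv.Perm (Fin d) => act π A ∈ S)).card
          = ∑ B ∈ S, ((Finset.univ.filter (fun π : Equiv.Perm (Fin d) => act π A ∈ S)).filter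
              (fun π => act π A = B)).card := by
        apply Finset.card_eq_sum_card_fiberwise
        intro π hπ
        exact (Finset.mem_filter.mp hπ).2
      rw [hfib]
      calc ∑ B ∈ S, ((Finset.univ.filter (fun π : Equiv.Perm (Fin d) => act π A ∈ S)).filter
              (fun π => act π A = B)).card
          ≤ ∑ B ∈ S, (Finset.univ.filter (fun π : Equiv.Perm (Fin d) => act π A = B)).card := by
            refine Finset.sum_le_sum (fun B _ => Finset.card_le_card ?_)
            intro π hπ
            simp only [Finset.mem_filter, Finset.mem_univ, true_and] at *
            exact hπ.2
        _ ≤ ∑ _B ∈ S, Nat.factorial ρ * Nat.factorial (d - ρ) :=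
            Finset.sum_le_sum (fun B hB => card_maps_le ρ A B (hcard A hA) (hcard B hB))
        _ = S.card * (Nat.factorial ρ * Nat.factorial (d - ρ)) := by
            rw [Finset.sum_const, smul_eq_mul]
    have h2q : 2 * (Finset.univ.filter (fun π : Equiv.Perm (Fin d) => act π A ∈ S)).card
        ≤ Nat.factorial d := by
      calc 2 * (Finset.univ.filter (fun π : Equiv.Perm (Fin d) => act π A ∈ S)).card
          ≤ 2 * (S.card * (Nat.factorial ρ * Nat.factorial (d - ρ))) := by omega
        _ = (2 * S.card) * (Nat.factorial ρ * Nat.factorial (d - ρ)) := by ring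
        _ ≤ Nat.choose d ρ * (Nat.factorial ρ * Nat.factorial (d - ρ)) :=
            Nat.mul_le_mul_right _ hhalf
        _ = Nat.factorial d := hfact
    omega
  -- the sum of cut counts over all permutations
  have hsum : ∑ π : Equiv.Perm (Fin d), cutc S π
      = ∑ A ∈ S, (Finset.univ.filter (fun π : Equiv.Perm (Fin d) => act π A ∉ S)).card := by
    have h1 : ∀ π : Equiv.Perm (Fin d), cutc S π
        = ∑ A ∈ S, if act π A ∉ S then 1 else 0 := by
      intro π
      rw [cutc, Finset.card_filter]
    have h2 : ∀ A : Finset (Fin d),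
        (Finset.univ.filter (fun π : Equiv.Perm (Fin d) => act π A ∉ S)).card
        = ∑ π : Equiv.Perm (Fin d), if act π A ∉ S then 1 else 0 := by
      intro A
      rw [Finset.card_filter]
    simp only [h1, h2]
    exact Finset.sum_comm
  have hlow : S.card * Nat.factorial d ≤ 2 * ∑ π : Equiv.Perm (Fin d), cutc S π := by
    rw [hsum, Finset.mul_sum]
    calc S.card * Nat.factorial d = ∑ _A ∈ S, Nat.factorial d := by
          rw [Finset.sum_const, smul_eq_mul]
      _ ≤ ∑ A ∈ S, 2 * (Finset.univ.filter
            (fun π : Equiv.Perm (Fin d) => act π A ∉ S)).card :=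
          Finset.sum_le_sum hout
  have hup := total_upper S
  have : S.card * Nat.factorial d ≤ Nat.factorial d * ∑ p ∈ Pairs d, cutc S (Equiv.swap p.1 p.2) :=
    le_trans hlow hup
  rw [mul_comm (Nat.factorial d)] at this
  exact Nat.le_of_mul_le_mul_right this (Nat.factorial_pos d)

end HS


namespace HS

variable {d : ℕ}

def vecOf (A : Finset (Fin d)) : Fin d → ℝ := fun i => if i ∈ A then 1 else 0

lemma vecOf_injective : Function.Injective (vecOf (d := d)) := by
  intro A B h
  ext i
  have := congrFun h i
  by_cases hA : i ∈ A <;> by_cases hB : i ∈ B <;>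
    simp [vecOf, hA, hB] at this ⊢ <;> try assumption

lemma mem_hypersimplexVerts {ρ : ℕ} {x : Fin d → ℝ} :
    x ∈ hypersimplexVerts d ρ ↔ ∃ A : Finset (Fin d), A.card = ρ ∧ x = vecOf A := by
  constructor
  · intro hx
    rcases Finset.mem_image.mp hx with ⟨b, hb, rfl⟩
    rcases Finset.mem_filter.mp hb with ⟨-, hcard⟩
    refine ⟨Finset.univ.filter (fun i => b i = true), hcard, ?_⟩
    funext i
    by_cases h : b i <;> simp [vecOf, h]
  · rintro ⟨A, hA, rfl⟩
    refine Finset.mem_image.mpr ⟨fun i => decide (i ∈ A), ?_, ?_⟩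
    · refine Finset.mem_filter.mpr ⟨Finset.mem_univ _, ?_⟩
      rw [← hA]
      congr 1
      ext i
      simp
    · funext i
      by_cases h : i ∈ A <;> simp [vecOf, h]

/-- The linear functional `x ↦ ∑ k, w k * x k`. -/
def lin (w : Fin d → ℝ) : (Fin d → ℝ) →ₗ[ℝ] ℝ where
  toFun := fun x => ∑ k, w k * x k
  map_add' := by
    intro x y
    simp [mul_add, Finset.sum_add_distrib]
  map_smul' := by
    intro c x
    simp only [Pi.smul_apply, smul_eq_mul, RingHom.id_apply, Finset.mul_sum]
    exact Finset.sum_congr rfl (fun k _ => by ring)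

lemma lin_vecOf (w : Fin d → ℝ) (C : Finset (Fin d)) :
    lin w (vecOf C) = ∑ k ∈ C, w k := by
  simp only [lin, LinearMap.coe_mk, AddHom.coe_mk, vecOf, mul_ite, mul_one, mul_zero]
  rw [Finset.sum_ite_mem, Finset.univ_inter]

end HS

namespace HS

section Swap

variable {ρ : ℕ} {A : Finset (Fin d)} {i j : Fin d}

/-- Weights: 2 on `A.erase i`, 1 on `i` and `j`, 0 elsewhere. -/
def wt (A : Finset (Fin d)) (i j : Fin d) : Fin d → ℝ :=
  fun k => if k ∈ A.erase i then 2 else if k = i ∨ k = j then 1 else 0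

lemma wt_eq (hj : j ∉ A) (k : Fin d) :
    wt A i j k = (if k ∈ A.erase i then (2:ℝ) else 0)
      + (if k ∈ ({i, j} : Finset (Fin d)) then (1:ℝ) else 0) := by
  have hmem : (k ∈ ({i, j} : Finset (Fin d))) ↔ (k = i ∨ k = j) := by
    simp [Finset.mem_insert]
  by_cases h1 : k ∈ A.erase i
  · have h2 : ¬(k = i ∨ k = j) := by
      rcases Finset.mem_erase.mp h1 with ⟨hki, hkA⟩
      rintro (rfl | rfl)
      · exact hki rfl
      · exact hj hkA
    simp [wt, h1, hmem, h2]
  · by_cases h2 : k = i ∨ k = j <;> simp [wt, h1, hmem, h2]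

lemma sum_wt (hj : j ∉ A) (C : Finset (Fin d)) :
    ∑ k ∈ C, wt A i j k
      = 2 * ((C ∩ A.erase i).card : ℝ) + ((C ∩ ({i, j} : Finset (Fin d))).card : ℝ) := by
  rw [Finset.sum_congr rfl (fun k _ => wt_eq hj k), Finset.sum_add_distrib]
  congr 1
  · rw [Finset.sum_ite_mem, Finset.sum_const, nsmul_eq_mul, mul_comm]
  · rw [Finset.sum_ite_mem, Finset.sum_const, nsmul_eq_mul, mul_one]

lemma card_bounds (hρ : A.card = ρ) (hi : i ∈ A) (hj : j ∉ A) (C : Finset (Fin d))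
    (hC : C.card = ρ) :
    (C ∩ A.erase i).card + 1 ≤ ρ ∧
      (C ∩ A.erase i).card + (C ∩ ({i, j} : Finset (Fin d))).card ≤ ρ := by
  have hE : (A.erase i).card + 1 = ρ := by
    rw [Finset.card_erase_add_one hi, hρ]
  constructor
  · have h1 : (C ∩ A.erase i).card ≤ (A.erase i).card :=
      Finset.card_le_card (Finset.inter_subset_right)
    omega
  · have hdisj : Disjoint (C ∩ A.erase i) (C ∩ ({i, j} : Finset (Fin d))) := by
      rw [Finset.disjoint_left]
      intro k h1 h2
      rcases Finset.mem_erase.mp (Finset.mem_inter.mp h1).2 with ⟨hki, hkA⟩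
      rcases Finset.mem_insert.mp (Finset.mem_inter.mp h2).2 with rfl | h
      · exact hki rfl
      · rw [Finset.mem_singleton] at h
        exact hj (h ▸ hkA)
    calc (C ∩ A.erase i).card + (C ∩ ({i, j} : Finset (Fin d))).card
        = ((C ∩ A.erase i) ∪ (C ∩ ({i, j} : Finset (Fin d)))).card :=
          (Finset.card_union_of_disjoint hdisj).symm
      _ ≤ C.card := Finset.card_le_card (by
          intro k hk
          rcases Finset.mem_union.mp hk with h | h
          · exact (Finset.mem_inter.mp h).1
          · exact (Finset.mem_inter.mp h).1)
      _ = ρ := hC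

lemma sum_wt_le (hρ : A.card = ρ) (hi : i ∈ A) (hj : j ∉ A) (C : Finset (Fin d))
    (hC : C.card = ρ) :
    ∑ k ∈ C, wt A i j k ≤ 2 * (ρ : ℝ) - 1 := by
  obtain ⟨h1, h2⟩ := card_bounds hρ hi hj C hC
  rw [sum_wt hj C]
  have : 2 * (C ∩ A.erase i).card + (C ∩ ({i, j} : Finset (Fin d))).card + 1 ≤ 2 * ρ := by omega
  push_cast
  have := (Nat.cast_le (α := ℝ)).mpr this
  push_cast at this
  linarith

lemma sum_wt_eq_iff (hρ : A.card = ρ) (hi : i ∈ A) (hj : j ∉ A) (C : Finset (Fin d))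
    (hC : C.card = ρ) (heq : ∑ k ∈ C, wt A i j k = 2 * (ρ : ℝ) - 1) :
    C = A ∨ C = insert j (A.erase i) := by
  obtain ⟨h1, h2⟩ := card_bounds hρ hi hj C hC
  rw [sum_wt hj C] at heq
  have hnat : 2 * (C ∩ A.erase i).card + (C ∩ ({i, j} : Finset (Fin d))).card + 1 = 2 * ρ := by
    have : (2 * ((C ∩ A.erase i).card : ℝ) + ((C ∩ ({i, j} : Finset (Fin d))).card : ℝ) + 1)
        = 2 * (ρ : ℝ) := by linarith
    exact_mod_cast this
  have ha : (C ∩ A.erase i).card + 1 = ρ := by omega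
  have hb : (C ∩ ({i, j} : Finset (Fin d))).card = 1 := by omega
  -- `A.erase i ⊆ C`
  have hEC : A.erase i ⊆ C := by
    have hsub : C ∩ A.erase i ⊆ A.erase i := Finset.inter_subset_right
    have hcard : (A.erase i).card ≤ (C ∩ A.erase i).card := by
      have hE : (A.erase i).card + 1 = ρ := by rw [Finset.card_erase_add_one hi, hρ]
      omega
    have := Finset.eq_of_subset_of_card_le hsub hcard
    rw [← this]
    exact Finset.inter_subset_left
  by_cases hiC : i ∈ C
  · left
    have hsub : A ⊆ C := by
      intro k hk
      by_cases hki : k = i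
      · exact hki ▸ hiC
      · exact hEC (Finset.mem_erase.mpr ⟨hki, hk⟩)
    exact (Finset.eq_of_subset_of_card_le hsub (by omega)).symm
  · right
    have hjC : j ∈ C := by
      rcases Finset.card_eq_one.mp hb with ⟨x, hx⟩
      have hxmem : x ∈ C ∩ ({i, j} : Finset (Fin d)) := hx ▸ Finset.mem_singleton_self x
      rcases Finset.mem_inter.mp hxmem with ⟨hxC, hxij⟩
      rcases Finset.mem_insert.mp hxij with rfl | hxj
      · exact absurd hxC hiC
      · rw [Finset.mem_singleton] at hxj
        exact hxj ▸ hxC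
    have hsub : insert j (A.erase i) ⊆ C := by
      intro k hk
      rcases Finset.mem_insert.mp hk with rfl | hk
      · exact hjC
      · exact hEC hk
    have hcard : C.card ≤ (insert j (A.erase i)).card := by
      rw [Finset.card_insert_of_notMem (fun h => hj (Finset.mem_of_mem_erase h))]
      have hE : (A.erase i).card + 1 = ρ := by rw [Finset.card_erase_add_one hi, hρ]
      omega
    exact (Finset.eq_of_subset_of_card_le hsub hcard).symm

end Swap

end HS

namespace HS

section Swap2

variable {ρ : ℕ} {A : Finset (Fin d)} {i j : Fin d}

lemma adj_of_swap (hρ : A.card = ρ) (hi : i ∈ A) (hj : j ∉ A) :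
    PolytopeAdj (hypersimplexVerts d ρ) (vecOf A) (vecOf (insert j (A.erase i))) := by
  classical
  set X := hypersimplexVerts d ρ with hX
  set B := insert j (A.erase i) with hB
  set f := lin (wt A i j) with hf
  set c : ℝ := 2 * (ρ : ℝ) - 1 with hc
  have hij : i ≠ j := fun h => hj (h ▸ hi)
  have hjE : j ∉ A.erase i := fun h => hj (Finset.mem_of_mem_erase h)
  have hiE : i ∉ A.erase i := Finset.notMem_erase i A
  have hE1 : (A.erase i).card + 1 = ρ := by rw [Finset.card_erase_add_one hi, hρ]
  have hBcard : B.card = ρ := by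
    rw [hB, Finset.card_insert_of_notMem hjE, hE1]
  have hAB : A ≠ B := by
    intro h
    exact hj (h ▸ (Finset.mem_insert_self j (A.erase i) : j ∈ B))
  have huX : vecOf A ∈ X := mem_hypersimplexVerts.mpr ⟨A, hρ, rfl⟩
  have hvX : vecOf B ∈ X := mem_hypersimplexVerts.mpr ⟨B, hBcard, rfl⟩
  have hne : vecOf A ≠ vecOf B := fun h => hAB (vecOf_injective h)
  -- values of `f` on the vertices
  have hvert : ∀ C : Finset (Fin d), C.card = ρ → f (vecOf C) ≤ c := by
    intro C hC
    rw [hf, lin_vecOf]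
    exact sum_wt_le hρ hi hj C hC
  have hfu : f (vecOf A) = c := by
    rw [hf, lin_vecOf, sum_wt hj A]
    have h1 : A ∩ A.erase i = A.erase i :=
      Finset.inter_eq_right.mpr (Finset.erase_subset i A)
    have h2 : A ∩ ({i, j} : Finset (Fin d)) = {i} := by
      ext k
      simp only [Finset.mem_inter, Finset.mem_insert, Finset.mem_singleton]
      constructor
      · rintro ⟨hkA, rfl | rfl⟩
        · rfl
        · exact absurd hkA hj
      · rintro rfl
        exact ⟨hi, Or.inl rfl⟩
    rw [h1, h2, Finset.card_singleton]
    have : ((A.erase i).card : ℝ) + 1 = (ρ : ℝ) := by exact_mod_cast hE1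
    push_cast
    linarith
  have hfv : f (vecOf B) = c := by
    rw [hf, lin_vecOf, sum_wt hj B]
    have h1 : B ∩ A.erase i = A.erase i :=
      Finset.inter_eq_right.mpr (Finset.subset_insert j (A.erase i))
    have h2 : B ∩ ({i, j} : Finset (Fin d)) = {j} := by
      ext k
      simp only [hB, Finset.mem_inter, Finset.mem_insert, Finset.mem_singleton]
      constructor
      · rintro ⟨hkB, hk⟩
        rcases hk with rfl | rfl
        · rcases hkB with h | h
          · exact h
          · exact absurd h hiE
        · rfl
      · rintro rfl
        exact ⟨Or.inl rfl, Or.inr rfl⟩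
    rw [h1, h2, Finset.card_singleton]
    have : ((A.erase i).card : ℝ) + 1 = (ρ : ℝ) := by exact_mod_cast hE1
    push_cast
    linarith
  -- `f ≤ c` on the convex hull
  have hle : ∀ x ∈ convexHull ℝ (X : Set (Fin d → ℝ)), f x ≤ c := by
    have hsub : (X : Set (Fin d → ℝ)) ⊆ {x | f x ≤ c} := by
      intro x hx
      rcases mem_hypersimplexVerts.mp hx with ⟨C, hC, rfl⟩
      exact hvert C hC
    have hconv : Convex ℝ {x : Fin d → ℝ | f x ≤ c} :=
      convex_halfSpace_le ⟨f.map_add, f.map_smul⟩ c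
    intro x hx
    exact convexHull_min hsub hconv hx
  refine ⟨huX, hvX, hne, f, c, hle, ?_⟩
  ext x
  simp only [Set.mem_setOf_eq, Set.mem_sep_iff]
  constructor
  · rintro ⟨hxhull, hfx⟩
    rw [Finset.convexHull_eq] at hxhull
    obtain ⟨μ, hμ0, hμ1, hx⟩ := hxhull
    rw [Finset.centerMass_eq_of_sum_1 _ _ hμ1] at hx
    simp only [id] at hx
    have hfx' : ∑ y ∈ X, μ y * f y = c := by
      rw [← hfx, ← hx, map_sum]
      exact Finset.sum_congr rfl (fun y _ => by rw [map_smul, smul_eq_mul])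
    have hzero : ∑ y ∈ X, μ y * (c - f y) = 0 := by
      have : ∑ y ∈ X, μ y * (c - f y) = (∑ y ∈ X, μ y) * c - ∑ y ∈ X, μ y * f y := by
        rw [Finset.sum_mul, ← Finset.sum_sub_distrib]
        exact Finset.sum_congr rfl (fun y _ => by ring)
      rw [this, hμ1, hfx', one_mul, sub_self]
    have hkey : ∀ y ∈ X, μ y ≠ 0 → y = vecOf A ∨ y = vecOf B := by
      intro y hy hμy
      have hterm : μ y * (c - f y) = 0 := by
        have hnn : ∀ y ∈ X, 0 ≤ μ y * (c - f y) := by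
          intro z hz
          have h1 : f z ≤ c := hle z (subset_convexHull ℝ (X : Set (Fin d → ℝ)) hz)
          exact mul_nonneg (hμ0 z hz) (by linarith)
        exact (Finset.sum_eq_zero_iff_of_nonneg hnn).mp hzero y hy
      have hfy : f y = c := by
        rcases mul_eq_zero.mp hterm with h | h
        · exact absurd h hμy
        · linarith
      rcases mem_hypersimplexVerts.mp hy with ⟨C, hC, rfl⟩
      rw [hf, lin_vecOf] at hfy
      rcases sum_wt_eq_iff hρ hi hj C hC hfy with rfl | rfl
      · exact Or.inl rfl
      · exact Or.inr rfl
    have hpair : ({vecOf A, vecOf B} : Finset (Fin d → ℝ)) ⊆ X := by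
      intro y hy
      rcases Finset.mem_insert.mp hy with rfl | hy
      · exact huX
      · rw [Finset.mem_singleton] at hy
        exact hy ▸ hvX
    have hvanish : ∀ y ∈ X, y ∉ ({vecOf A, vecOf B} : Finset (Fin d → ℝ)) → μ y • y = 0 := by
      intro y hy hym
      by_cases hμy : μ y = 0
      · rw [hμy, zero_smul]
      · exfalso
        rcases hkey y hy hμy with rfl | rfl
        · exact hym (Finset.mem_insert_self _ _)
        · exact hym (Finset.mem_insert.mpr (Or.inr (Finset.mem_singleton_self _)))
    have hμvanish : ∀ y ∈ X, y ∉ ({vecOf A, vecOf B} : Finset (Fin d → ℝ)) → μ y = 0 := by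
      intro y hy hym
      by_cases hμy : μ y = 0
      · exact hμy
      · exfalso
        rcases hkey y hy hμy with rfl | rfl
        · exact hym (Finset.mem_insert_self _ _)
        · exact hym (Finset.mem_insert.mpr (Or.inr (Finset.mem_singleton_self _)))
    have hxpair : x = μ (vecOf A) • vecOf A + μ (vecOf B) • vecOf B := by
      rw [← hx, ← Finset.sum_subset hpair (fun y hy hym => hvanish y hy hym)]
      rw [Finset.sum_pair hne]
    have hsum1 : μ (vecOf A) + μ (vecOf B) = 1 := by
      rw [← hμ1, ← Finset.sum_subset hpair (fun y hy hym => hμvanish y hy hym)]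
      rw [Finset.sum_pair hne]
    exact ⟨μ (vecOf A), μ (vecOf B), hμ0 _ huX, hμ0 _ hvX, hsum1, hxpair.symm⟩
  · rintro ⟨a, b, ha, hb, hab, rfl⟩
    constructor
    · exact (convex_convexHull ℝ (X : Set (Fin d → ℝ)))
        (subset_convexHull ℝ _ huX) (subset_convexHull ℝ _ hvX) ha hb hab
    · rw [map_add, map_smul, map_smul, smul_eq_mul, smul_eq_mul, hfu, hfv]
      nlinarith [hab]

end Swap2

end HS


namespace HS

variable {d : ℕ}

lemma image_swap_insert {A : Finset (Fin d)} {i j : Fin d} (hi : i ∈ A) (hj : j ∉ A) :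
    A.image (Equiv.swap i j) = insert j (A.erase i) := by
  ext x
  simp only [Finset.mem_image, Finset.mem_insert, Finset.mem_erase]
  constructor
  · rintro ⟨a, ha, rfl⟩
    by_cases hai : a = i
    · subst hai
      left
      exact Equiv.swap_apply_left a j
    · have haj : a ≠ j := fun h => hj (h ▸ ha)
      rw [Equiv.swap_apply_of_ne_of_ne hai haj]
      exact Or.inr ⟨hai, ha⟩
  · rintro (h | ⟨hxi, hxA⟩)
    · subst h
      exact ⟨i, hi, Equiv.swap_apply_left i x⟩
    · exact ⟨x, hxA, Equiv.swap_apply_of_ne_of_ne hxi (fun h => hj (h ▸ hxA))⟩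

lemma image_swap_self {A : Finset (Fin d)} {i j : Fin d} (h : i ∈ A ↔ j ∈ A) :
    A.image (Equiv.swap i j) = A := by
  ext x
  simp only [Finset.mem_image]
  constructor
  · rintro ⟨a, ha, rfl⟩
    by_cases hai : a = i
    · subst hai
      rw [Equiv.swap_apply_left]
      exact h.mp ha
    · by_cases haj : a = j
      · subst haj
        rw [Equiv.swap_apply_right]
        exact h.mpr ha
      · rwa [Equiv.swap_apply_of_ne_of_ne hai haj]
  · intro hx
    refine ⟨Equiv.swap i j x, ?_, Equiv.swap_apply_self i j x⟩
    by_cases hxi : x = i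
    · subst hxi
      rw [Equiv.swap_apply_left]
      exact h.mp hx
    · by_cases hxj : x = j
      · subst hxj
        rw [Equiv.swap_apply_right]
        exact h.mpr hx
      · rwa [Equiv.swap_apply_of_ne_of_ne hxi hxj]

lemma image_swap_cases {A : Finset (Fin d)} {i j : Fin d} (hij : i ≠ j)
    (hne : A.image (Equiv.swap i j) ≠ A) :
    (i ∈ A ∧ j ∉ A ∧ A.image (Equiv.swap i j) = insert j (A.erase i)) ∨
    (j ∈ A ∧ i ∉ A ∧ A.image (Equiv.swap i j) = insert i (A.erase j)) := by
  by_cases hi : i ∈ A <;> by_cases hj : j ∈ A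
  · exact absurd (image_swap_self (iff_of_true hi hj)) hne
  · exact Or.inl ⟨hi, hj, image_swap_insert hi hj⟩
  · refine Or.inr ⟨hj, hi, ?_⟩
    rw [Equiv.swap_comm]
    exact image_swap_insert hj hi
  · exact absurd (image_swap_self (iff_of_false hi hj)) hne

lemma insert_erase_unique {A : Finset (Fin d)} {a b a' b' : Fin d}
    (ha : a ∈ A) (hb : b ∉ A) (ha' : a' ∈ A) (hb' : b' ∉ A)
    (h : insert b (A.erase a) = insert b' (A.erase a')) : a = a' ∧ b = b' := by
  have hbb : b = b' := by
    have hbmem : b ∈ insert b' (A.erase a') := h ▸ Finset.mem_insert_self b _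
    rcases Finset.mem_insert.mp hbmem with h1 | h1
    · exact h1
    · exact absurd (Finset.mem_of_mem_erase h1) hb
  refine ⟨?_, hbb⟩
  by_contra hne
  have hL : a' ∈ insert b (A.erase a) :=
    Finset.mem_insert.mpr (Or.inr (Finset.mem_erase.mpr ⟨fun h' => hne h'.symm, ha'⟩))
  have hR : a' ∉ insert b' (A.erase a') := by
    intro hmem
    rcases Finset.mem_insert.mp hmem with h1 | h1
    · exact hb' (h1 ▸ ha')
    · exact (Finset.notMem_erase a' A) h1
  exact hR (h ▸ hL)

end HS

namespace HS

lemma hyper_eq_image (d ρ : ℕ) :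
    hypersimplexVerts d ρ
      = (Finset.univ.filter (fun A : Finset (Fin d) => A.card = ρ)).image vecOf := by
  ext x
  rw [mem_hypersimplexVerts, Finset.mem_image]
  constructor
  · rintro ⟨A, hA, rfl⟩
    exact ⟨A, Finset.mem_filter.mpr ⟨Finset.mem_univ _, hA⟩, rfl⟩
  · rintro ⟨A, hA, rfl⟩
    exact ⟨A, (Finset.mem_filter.mp hA).2, rfl⟩

lemma card_hyper (d ρ : ℕ) : (hypersimplexVerts d ρ).card = Nat.choose d ρ := by
  rw [hyper_eq_image, Finset.card_image_of_injective _ vecOf_injective]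
  have h : (Finset.univ.filter (fun A : Finset (Fin d) => A.card = ρ))
      = Finset.powersetCard ρ (Finset.univ : Finset (Fin d)) := by
    ext A
    simp [Finset.mem_powersetCard, Finset.subset_univ]
  rw [h, Finset.card_powersetCard, Finset.card_univ, Fintype.card_fin]

lemma cut_lower (d ρ : ℕ) (hρd : ρ ≤ d)
    (S : Set {x // x ∈ hypersimplexVerts d ρ})
    (hhalf : 2 * S.ncard ≤ Fintype.card {x // x ∈ hypersimplexVerts d ρ}) :
    S.ncard ≤ cutCard (polytopeGraph (hypersimplexVerts d ρ)) S := by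
  classical
  obtain ⟨A0, -, hA0⟩ := Finset.exists_subset_card_eq (s := (Finset.univ : Finset (Fin d))) (n := ρ)
    (by rw [Finset.card_univ, Fintype.card_fin]; exact hρd)
  haveI hVne : Nonempty {x // x ∈ hypersimplexVerts d ρ} :=
    ⟨⟨vecOf A0, mem_hypersimplexVerts.mpr ⟨A0, hA0, rfl⟩⟩⟩
  set 𝒮 : Finset (Finset (Fin d)) :=
    Finset.univ.filter (fun A => A.card = ρ ∧ vecOf A ∈ Subtype.val '' S) with h𝒮
  have hmem𝒮 : ∀ A : Finset (Fin d), A ∈ 𝒮 ↔ (A.card = ρ ∧ vecOf A ∈ Subtype.val '' S) := by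
    intro A
    simp [h𝒮]
  -- the cardinality transfer
  have himg : Subtype.val '' S = ↑(𝒮.image vecOf) := by
    ext x
    simp only [Finset.coe_image, Set.mem_image, Finset.mem_coe]
    constructor
    · rintro ⟨s, hs, rfl⟩
      rcases mem_hypersimplexVerts.mp s.2 with ⟨A, hA, hAx⟩
      refine ⟨A, (hmem𝒮 A).mpr ⟨hA, ?_⟩, hAx.symm⟩
      rw [← hAx]
      exact ⟨s, hs, rfl⟩
    · rintro ⟨A, hA, rfl⟩
      exact ((hmem𝒮 A).mp hA).2
  have hncard : S.ncard = 𝒮.card := by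
    calc S.ncard = (Subtype.val '' S).ncard :=
          (Set.ncard_image_of_injective S Subtype.val_injective).symm
      _ = ((𝒮.image vecOf : Finset (Fin d → ℝ)) : Set (Fin d → ℝ)).ncard := by rw [himg]
      _ = (𝒮.image vecOf).card := Set.ncard_coe_finset _
      _ = 𝒮.card := Finset.card_image_of_injective _ vecOf_injective
  have hcard𝒮 : ∀ A ∈ 𝒮, A.card = ρ := fun A hA => ((hmem𝒮 A).mp hA).1
  have hhalf' : 2 * 𝒮.card ≤ Nat.choose d ρ := by
    rw [← hncard]
    calc 2 * S.ncard ≤ Fintype.card {x // x ∈ hypersimplexVerts d ρ} := hhalf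
      _ = (hypersimplexVerts d ρ).card := Fintype.card_coe _
      _ = Nat.choose d ρ := card_hyper d ρ
  have hmain := main_comb ρ hρd 𝒮 hcard𝒮 hhalf'
  -- now inject the cut pairs into the graph cut
  set cutSet : Set ({x // x ∈ hypersimplexVerts d ρ} × {x // x ∈ hypersimplexVerts d ρ}) :=
    {p | p.1 ∈ S ∧ p.2 ∉ S ∧ (polytopeGraph (hypersimplexVerts d ρ)).Adj p.1 p.2} with hcutSet
  have hfin : cutSet.Finite := Set.toFinite _
  have hcc : cutCard (polytopeGraph (hypersimplexVerts d ρ)) S = hfin.toFinset.card :=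
    Set.ncard_eq_toFinset_card _ hfin
  set I : Finset ((_ : Fin d × Fin d) × Finset (Fin d)) :=
    (Pairs d).sigma (fun p => 𝒮.filter (fun A => act (Equiv.swap p.1 p.2) A ∉ 𝒮)) with hI
  have hIcard : I.card = ∑ p ∈ Pairs d, cutc 𝒮 (Equiv.swap p.1 p.2) := Finset.card_sigma _ _
  -- the injection
  have hstep : I.card ≤ hfin.toFinset.card := by
    set f : ((_ : Fin d × Fin d) × Finset (Fin d)) →
        ({x // x ∈ hypersimplexVerts d ρ} × {x // x ∈ hypersimplexVerts d ρ}) :=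
      fun q =>
        if h : vecOf q.2 ∈ hypersimplexVerts d ρ ∧
            vecOf (act (Equiv.swap q.1.1 q.1.2) q.2) ∈ hypersimplexVerts d ρ then
          (⟨vecOf q.2, h.1⟩, ⟨vecOf (act (Equiv.swap q.1.1 q.1.2) q.2), h.2⟩)
        else Classical.arbitrary _
      with hfdef
    have hprep : ∀ q ∈ I, q.2 ∈ 𝒮 ∧ act (Equiv.swap q.1.1 q.1.2) q.2 ∉ 𝒮 ∧
        q.1.1.val < q.1.2.val ∧ q.2.card = ρ ∧ (act (Equiv.swap q.1.1 q.1.2) q.2).card = ρ ∧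
        vecOf q.2 ∈ hypersimplexVerts d ρ ∧
        vecOf (act (Equiv.swap q.1.1 q.1.2) q.2) ∈ hypersimplexVerts d ρ := by
      rintro ⟨p, A⟩ hq
      rw [hI, Finset.mem_sigma] at hq
      obtain ⟨hp, hA⟩ := hq
      rw [Finset.mem_filter] at hA
      obtain ⟨hA𝒮, hout⟩ := hA
      have hplt : p.1.val < p.2.val := by
        simpa [Pairs, Finset.mem_filter] using hp
      have hAcard : A.card = ρ := hcard𝒮 A hA𝒮
      have hBcard : (act (Equiv.swap p.1 p.2) A).card = ρ := by rw [act_card, hAcard]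
      exact ⟨hA𝒮, hout, hplt, hAcard, hBcard,
        mem_hypersimplexVerts.mpr ⟨A, hAcard, rfl⟩,
        mem_hypersimplexVerts.mpr ⟨_, hBcard, rfl⟩⟩
    refine Finset.card_le_card_of_injOn f ?_ ?_
    · rintro ⟨p, A⟩ hq
      obtain ⟨hA𝒮, hout, hplt, hAcard, hBcard, hAX, hBX⟩ := hprep ⟨p, A⟩ hq
      dsimp only at hA𝒮 hout hplt hAcard hBcard hAX hBX
      have hcond : vecOf A ∈ hypersimplexVerts d ρ ∧
          vecOf (act (Equiv.swap p.1 p.2) A) ∈ hypersimplexVerts d ρ := ⟨hAX, hBX⟩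
      have e1 : f ⟨p, A⟩ = (⟨vecOf A, hcond.1⟩, ⟨vecOf (act (Equiv.swap p.1 p.2) A), hcond.2⟩) := by
        rw [hfdef]
        exact dif_pos hcond
      rw [e1, Finset.mem_coe, Set.Finite.mem_toFinset, hcutSet]
      have hij : p.1 ≠ p.2 := by
        intro h
        rw [h] at hplt
        omega
      have hBne : A.image (Equiv.swap p.1 p.2) ≠ A := by
        intro h
        apply hout
        show act (Equiv.swap p.1 p.2) A ∈ 𝒮
        rw [show act (Equiv.swap p.1 p.2) A = A.image (Equiv.swap p.1 p.2) from rfl, h]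
        exact hA𝒮
      refine ⟨?_, ?_, ?_⟩
      · obtain ⟨s, hs, hval⟩ := ((hmem𝒮 A).mp hA𝒮).2
        have : s = ⟨vecOf A, hcond.1⟩ := Subtype.ext hval
        rwa [← this]
      · intro hmem
        apply hout
        refine (hmem𝒮 _).mpr ⟨hBcard, ?_⟩
        exact ⟨_, hmem, rfl⟩
      · show PolytopeAdj (hypersimplexVerts d ρ) (vecOf A) (vecOf (act (Equiv.swap p.1 p.2) A))
        rcases image_swap_cases hij hBne with ⟨h1, h2, h3⟩ | ⟨h1, h2, h3⟩
        · rw [show act (Equiv.swap p.1 p.2) A = A.image (Equiv.swap p.1 p.2) from rfl, h3]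
          exact adj_of_swap hAcard h1 h2
        · rw [show act (Equiv.swap p.1 p.2) A = A.image (Equiv.swap p.1 p.2) from rfl, h3]
          exact adj_of_swap hAcard h1 h2
    · rintro ⟨p, A⟩ hq ⟨p', A'⟩ hq' heq
      obtain ⟨hA𝒮, hout, hplt, hAcard, hBcard, hAX, hBX⟩ := hprep ⟨p, A⟩ hq
      obtain ⟨hA𝒮', hout', hplt', hAcard', hBcard', hAX', hBX'⟩ := hprep ⟨p', A'⟩ hq'
      dsimp only at hA𝒮 hout hplt hAcard hBcard hAX hBX
      dsimp only at hA𝒮' hout' hplt' hAcard' hBcard' hAX' hBX'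
      have hcond : vecOf A ∈ hypersimplexVerts d ρ ∧
          vecOf (act (Equiv.swap p.1 p.2) A) ∈ hypersimplexVerts d ρ := ⟨hAX, hBX⟩
      have hcond' : vecOf A' ∈ hypersimplexVerts d ρ ∧
          vecOf (act (Equiv.swap p'.1 p'.2) A') ∈ hypersimplexVerts d ρ := ⟨hAX', hBX'⟩
      have e1 : f ⟨p, A⟩ = (⟨vecOf A, hcond.1⟩, ⟨vecOf (act (Equiv.swap p.1 p.2) A), hcond.2⟩) := by
        rw [hfdef]
        exact dif_pos hcond
      have e2 : f ⟨p', A'⟩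
          = (⟨vecOf A', hcond'.1⟩, ⟨vecOf (act (Equiv.swap p'.1 p'.2) A'), hcond'.2⟩) := by
        rw [hfdef]
        exact dif_pos hcond'
      rw [e1, e2, Prod.mk.injEq, Subtype.mk.injEq, Subtype.mk.injEq] at heq
      obtain ⟨hu, hv⟩ := heq
      have hAA : A = A' := vecOf_injective hu
      subst hAA
      have hBB : A.image (Equiv.swap p.1 p.2) = A.image (Equiv.swap p'.1 p'.2) :=
        vecOf_injective hv
      have hij : p.1 ≠ p.2 := by
        intro h
        rw [h] at hplt
        omega
      have hij' : p'.1 ≠ p'.2 := by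
        intro h
        rw [h] at hplt'
        omega
      have hBne : A.image (Equiv.swap p.1 p.2) ≠ A := by
        intro h
        apply hout
        show act (Equiv.swap p.1 p.2) A ∈ 𝒮
        rw [show act (Equiv.swap p.1 p.2) A = A.image (Equiv.swap p.1 p.2) from rfl, h]
        exact hA𝒮
      have hBne' : A.image (Equiv.swap p'.1 p'.2) ≠ A := by
        rw [← hBB]
        exact hBne
      have hpp : p = p' := by
        rcases image_swap_cases hij hBne with ⟨h1, h2, h3⟩ | ⟨h1, h2, h3⟩ <;>
          rcases image_swap_cases hij' hBne' with ⟨g1, g2, g3⟩ | ⟨g1, g2, g3⟩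
        · obtain ⟨e1', e2'⟩ := insert_erase_unique h1 h2 g1 g2 (h3.symm.trans (hBB.trans g3))
          exact Prod.ext e1' e2'
        · obtain ⟨e1', e2'⟩ := insert_erase_unique h1 h2 g1 g2 (h3.symm.trans (hBB.trans g3))
          exfalso
          rw [e1', e2'] at hplt
          omega
        · obtain ⟨e1', e2'⟩ := insert_erase_unique h1 h2 g1 g2 (h3.symm.trans (hBB.trans g3))
          exfalso
          rw [e1', e2'] at hplt
          omega
        · obtain ⟨e1', e2'⟩ := insert_erase_unique h1 h2 g1 g2 (h3.symm.trans (hBB.trans g3))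
          exact Prod.ext e2' e1'
      subst hpp
      rfl
  calc S.ncard = 𝒮.card := hncard
    _ ≤ ∑ p ∈ Pairs d, cutc 𝒮 (Equiv.swap p.1 p.2) := hmain
    _ = I.card := hIcard.symm
    _ ≤ hfin.toFinset.card := hstep
    _ = cutCard (polytopeGraph (hypersimplexVerts d ρ)) S := hcc.symm

end HS


/-- For every `d ≥ 2` and every `ρ` with `1 ≤ ρ ≤ d − 1`, the
hyper-simplex `Δ(d, ρ) = conv{v ∈ {0,1}^d : Σᵢ vᵢ = ρ}` satisfies
`h(G(Δ(d, ρ))) ≥ 1`. -/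
theorem expansion_of_hypersimplex (d ρ : ℕ) (hd : 2 ≤ d) (hρ1 : 1 ≤ ρ)
    (hρ2 : ρ ≤ d - 1) :
    1 ≤ edgeExpansion (polytopeGraph (hypersimplexVerts d ρ)) := by
  classical
  have hρd : ρ ≤ d := by omega
  obtain ⟨A0, -, hA0⟩ := Finset.exists_subset_card_eq (s := (Finset.univ : Finset (Fin d))) (n := ρ)
    (by rw [Finset.card_univ, Fintype.card_fin]; exact hρd)
  have hA0ne : A0.Nonempty := Finset.card_pos.mp (by rw [hA0]; omega)
  obtain ⟨i, hi⟩ := hA0ne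
  have hcompl : (Finset.univ \ A0).Nonempty := by
    apply Finset.card_pos.mp
    rw [Finset.card_sdiff_of_subset (Finset.subset_univ _), Finset.card_univ, Fintype.card_fin, hA0]
    omega
  obtain ⟨j, hj'⟩ := hcompl
  have hj : j ∉ A0 := (Finset.mem_sdiff.mp hj').2
  have hjE : j ∉ A0.erase i := fun h => hj (Finset.mem_of_mem_erase h)
  have hB0 : (insert j (A0.erase i)).card = ρ := by
    rw [Finset.card_insert_of_notMem hjE, Finset.card_erase_add_one hi, hA0]
  have hA0B0 : A0 ≠ insert j (A0.erase i) := by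
    intro h
    exact hj (h ▸ Finset.mem_insert_self j (A0.erase i))
  have hmemA0 : HS.vecOf A0 ∈ hypersimplexVerts d ρ :=
    HS.mem_hypersimplexVerts.mpr ⟨A0, hA0, rfl⟩
  have hmemB0 : HS.vecOf (insert j (A0.erase i)) ∈ hypersimplexVerts d ρ :=
    HS.mem_hypersimplexVerts.mpr ⟨_, hB0, rfl⟩
  have h2 : 2 ≤ Fintype.card {x // x ∈ hypersimplexVerts d ρ} := by
    rw [Fintype.card_coe]
    refine Finset.one_lt_card.mpr ⟨HS.vecOf A0, hmemA0, HS.vecOf (insert j (A0.erase i)),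
      hmemB0, fun h => hA0B0 (HS.vecOf_injective h)⟩
  set v0 : {x // x ∈ hypersimplexVerts d ρ} := ⟨HS.vecOf A0, hmemA0⟩ with hv0
  apply le_csInf
  · refine ⟨(cutCard (polytopeGraph (hypersimplexVerts d ρ)) {v0} : ℝ)
      / ((Set.ncard {v0} : ℝ)), {v0}, Set.singleton_nonempty _, ?_, rfl⟩
    rw [Set.ncard_singleton]
    omega
  · rintro r ⟨S, hSne, hhalf, rfl⟩
    have hkey := HS.cut_lower d ρ hρd S hhalf
    have hpos : 0 < S.ncard := (Set.ncard_pos (Set.toFinite S)).mpr hSne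
    rw [le_div_iff₀ (by exact_mod_cast hpos), one_mul]
    exact_mod_cast hkey
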